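/- Let C ⊆ ℕ be a co-maximal set and let φ : ℕ →. ℕ be a partial computable function with C ⊆* dom(φ). Then there is a total computable function f : ℕ → ℕ such that C ⊆* {n : φ(n)↓ and φ(n) = f(n)}. -/

import Mathlib

/-- `X ⊆* Y`: `X` is contained in `Y` up to finitely many elements. -/
def AlmostSubset (X Y : Set ℕ) : Prop := (X \ Y).Finite

/-- `W ⊆ ℕ` is computably enumerable: it is the domain of a partial computable function. -/
def CESet (W : Set ℕ) : Prop := ∃ f : ℕ →. ℕ, Partrec f ∧ W = f.Dom

/-- `W ⊆ ℕ` is computable (decidable). -/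
def ComputableSet (W : Set ℕ) : Prop :=
  ∃ f : ℕ → Bool, Computable f ∧ ∀ n, n ∈ W ↔ f n = true

/-- `C ⊆ ℕ` is cohesive: `C` is infinite, and for every c.e. set `W`, either `W ∩ C`
or `Wᶜ ∩ C` is finite. -/
def Cohesive (C : Set ℕ) : Prop :=
  C.Infinite ∧ ∀ W : Set ℕ, CESet W → (W ∩ C).Finite ∨ (Wᶜ ∩ C).Finite

/-- `C ⊆ ℕ` is r-cohesive. -/
def RCohesive (C : Set ℕ) : Prop :=
  C.Infinite ∧ ∀ W : Set ℕ, ComputableSet W → (W ∩ C).Finite ∨ (Wᶜ ∩ C).Finite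

/-- `C` is co-maximal: its complement is maximal, i.e. `C` is cohesive with c.e. complement. -/
def CoMaximal (C : Set ℕ) : Prop := Cohesive C ∧ CESet Cᶜ

/-- A computable (decidable) binary relation on `ℕ`. -/
def ComputableRel (r : ℕ → ℕ → Prop) : Prop :=
  ∃ f : ℕ → ℕ → Bool, Computable₂ f ∧ ∀ m n, r m n ↔ f m n = true

/-- `y` is the immediate successor of `x` with respect to the strict order `r`. -/
def ImmSucc {α : Type*} (r : α → α → Prop) (x y : α) : Prop :=
  r x y ∧ ∀ z, ¬(r x z ∧ r z y)

/-- A strict order on `ℕ` has order type ω when it is isomorphic to `(ℕ, <)`. -/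
def OrderTypeOmega (r : ℕ → ℕ → Prop) : Prop :=
  Nonempty (r ≃r ((· < ·) : ℕ → ℕ → Prop))

/-- Carrier of the cohesive power: partial computable functions whose domain
almost contains `C`. -/
def CohCarrier (C : Set ℕ) : Type :=
  {φ : ℕ →. ℕ // Partrec φ ∧ (C \ φ.Dom).Finite}

/-- Two partial functions agree (are defined and equal) on almost all of `C`. -/
def eqAE (C : Set ℕ) (φ ψ : ℕ →. ℕ) : Prop :=
  (C \ {n | ∃ a, a ∈ φ n ∧ a ∈ ψ n}).Finite

/-- The equivalence relation underlying the cohesive power. -/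
def cohSetoid (C : Set ℕ) : Setoid (CohCarrier C) where
  r φ ψ := eqAE C φ.1 ψ.1
  iseqv := by
    constructor
    · intro φ
      refine φ.2.2.subset fun n hn => ⟨hn.1, fun hd => hn.2 ?_⟩
      obtain ⟨a, ha⟩ := (PFun.mem_dom _ _).mp hd
      exact ⟨a, ha, ha⟩
    · intro φ ψ h
      exact h.subset fun n hn => ⟨hn.1, fun ⟨a, h1, h2⟩ => hn.2 ⟨a, h2, h1⟩⟩
    · intro φ ψ χ h1 h2
      refine (h1.union h2).subset fun n hn => ?_
      by_cases hmem : ∃ a, a ∈ φ.1 n ∧ a ∈ ψ.1 n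
      · obtain ⟨a, ha1, ha2⟩ := hmem
        refine Or.inr ⟨hn.1, fun ⟨b, hb1, hb2⟩ => hn.2 ⟨a, ha1, ?_⟩⟩
        rwa [Part.mem_unique ha2 hb1]
      · exact Or.inl ⟨hn.1, hmem⟩

/-- The domain of the cohesive power of a computable structure on `ℕ` over `C`. -/
def CohPow (C : Set ℕ) : Type := Quotient (cohSetoid C)

/-- The class of a partial computable function in the cohesive power. -/
def CohPow.mk {C : Set ℕ} (φ : CohCarrier C) : CohPow C := Quotient.mk (cohSetoid C) φ

/-- `φ(n) ≺ ψ(n)` (both defined) for almost all `n ∈ C`. -/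
def ltAE (C : Set ℕ) (r : ℕ → ℕ → Prop) (φ ψ : ℕ →. ℕ) : Prop :=
  (C \ {n | ∃ a b, a ∈ φ n ∧ b ∈ ψ n ∧ r a b}).Finite

/-- The order of the cohesive power of the computable linear order `(ℕ, r)` over `C`. -/
def CohPow.Lt (C : Set ℕ) (r : ℕ → ℕ → Prop) (x y : CohPow C) : Prop :=
  ∃ φ ψ : CohCarrier C, x = CohPow.mk φ ∧ y = CohPow.mk ψ ∧ ltAE C r φ.1 ψ.1

/-- The sum `L₀ + L₁` of two linear orders on `ℕ`, coded on `ℕ` via the computable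
pairing `⟨0, l⟩ ↦ 2l`, `⟨1, l⟩ ↦ 2l + 1`. -/
def sumRel (r₀ r₁ : ℕ → ℕ → Prop) (m n : ℕ) : Prop :=
  (m % 2 = 0 ∧ n % 2 = 1) ∨
  (m % 2 = 0 ∧ n % 2 = 0 ∧ r₀ (m / 2) (n / 2)) ∨
  (m % 2 = 1 ∧ n % 2 = 1 ∧ r₁ (m / 2) (n / 2))

/-- The lexicographic product `L₀ ×ₗ L₁` (first coordinate dominant) of two linear
orders on `ℕ`, coded on `ℕ` via the computable pairing `Nat.pair`. -/
def lexRel (r₀ r₁ : ℕ → ℕ → Prop) (m n : ℕ) : Prop :=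
  r₀ m.unpair.1 n.unpair.1 ∨ (m.unpair.1 = n.unpair.1 ∧ r₁ m.unpair.2 n.unpair.2)

/-- The strict order of `ℕ + ℚ ×ₗ ℤ`. -/
def NQZlt : ℕ ⊕ ℚ × ℤ → ℕ ⊕ ℚ × ℤ → Prop :=
  Sum.Lex (· < ·) (Prod.Lex (· < ·) (· < ·))

/-- The element of the cohesive power represented by the constant function `k`. -/
def constElt (C : Set ℕ) (k : ℕ) : CohPow C :=
  CohPow.mk ⟨fun _ => Part.some k, Partrec.const' (Part.some k), by
    have : (PFun.Dom fun _ : ℕ => Part.some k) = Set.univ := by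
      ext n; simp [PFun.Dom]
    rw [this, Set.diff_univ]; exact Set.finite_empty⟩

/-- The element of the cohesive power represented by the identity function. -/
def idElt (C : Set ℕ) : CohPow C :=
  CohPow.mk ⟨fun n => Part.some n, Partrec.some, by
    have : (PFun.Dom fun n : ℕ => Part.some n) = Set.univ := by
      ext n; simp [PFun.Dom]
    rw [this, Set.diff_univ]; exact Set.finite_empty⟩

lemma primrecPred_mem_list (l : List ℕ) : PrimrecPred fun n : ℕ => n ∈ l := by
  induction l with
  | nil =>
    have : Primrec fun _ : ℕ => (false : Bool) := Primrec.const false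
    exact (Primrec.primrecPred (p := fun _ : ℕ => False) (this.of_eq fun n => by simp)).of_eq fun n => by simp
  | cons a l ih =>
    have h1 : PrimrecPred fun n : ℕ => n = a :=
      Primrec.eq.comp Primrec.id (Primrec.const a)
    exact (h1.or ih).of_eq fun n => by simp

lemma primrecPred_mem_finset (L : Finset ℕ) : PrimrecPred fun n : ℕ => n ∈ L :=
  (primrecPred_mem_list L.val.toList).of_eq fun n => by
    exact Multiset.mem_toList.trans Finset.mem_def.symm

/-- Over a co-maximal set, every partial computable function whose domain almost
contains `C` agrees on almost all of `C` with a total computable function. -/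
theorem partial_computable_eq_total_on_comaximal (C : Set ℕ) (hC : CoMaximal C)
    (φ : ℕ →. ℕ) (hφ : Partrec φ) (hdom : (C \ φ.Dom).Finite) :
    ∃ f : ℕ → ℕ, Computable f ∧ (C \ {n | f n ∈ φ n}).Finite := by
  obtain ⟨ψ, hψ, hψdom⟩ := hC.2
  -- merge φ with the enumeration of Cᶜ mapped to 0
  have hf₂ : Partrec (fun n => (ψ n).map (fun _ => 0) : ℕ →. ℕ) :=
    hψ.map ((Computable.const 0).comp Computable.fst).to₂
  obtain ⟨k, hk, hK⟩ := Partrec.merge' hφ hf₂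
  -- the finitely many exceptional points
  obtain ⟨L, hL⟩ := hdom.exists_finset_coe
  -- membership in L is primrec
  have hmem : PrimrecPred fun n : ℕ => n ∈ L := primrecPred_mem_finset L
  have hc : Computable fun n : ℕ => decide (n ∈ L) := hmem.decide.to_comp
  -- the total search function
  set h : ℕ →. ℕ := fun n => bif decide (n ∈ L) then Part.some 0 else k n with hh
  have hhp : Partrec h := Partrec.cond hc (Partrec.const' _) hk
  have htot : ∀ n, (h n).Dom := by
    intro n
    by_cases hn : n ∈ L
    · simp [hh, hn]
    · have hdk : (k n).Dom := by
        refine (hK n).2.mpr ?_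
        by_cases hnc : n ∈ C
        · left
          by_contra hnd
          exact hn (by rw [← Finset.mem_coe, hL]; exact ⟨hnc, hnd⟩)
        · right
          have : n ∈ ψ.Dom := by rw [← hψdom]; exact hnc
          simpa [Part.dom_iff_mem] using this
      simp [hh, hn, hdk]
  refine ⟨fun n => (h n).get (htot n), hhp.of_eq_tot (fun n => Part.get_mem _), ?_⟩
  apply hdom.subset
  intro n hn
  refine ⟨hn.1, fun hnd : n ∈ φ.Dom => hn.2 ?_⟩
  have hnL : n ∉ L := by
    intro hmem'
    have : n ∈ C \ φ.Dom := by rw [← hL]; exact hmem'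
    exact this.2 hnd
  have heq : h n = k n := by simp [hh, hnL]
  have hval : (h n).get (htot n) ∈ k n := by
    rw [Part.get_eq_get_of_eq (h n) (htot n) heq]
    exact Part.get_mem _
  rcases (hK n).1 _ hval with h1 | h1
  · exact h1
  · exfalso
    obtain ⟨a, ha, -⟩ := Part.mem_map_iff _ |>.mp h1
    have : n ∈ ψ.Dom := Part.dom_iff_mem.mpr ⟨a, ha⟩
    rw [← hψdom] at this
    exact this hn.1
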